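/- (f-information bound) Let f : [0,∞) → ℝ be a convex function with f(1) = 0 (finite at 0). Then for finite random variables X, Y with joint distribution P_{XY}, the f-information satisfies I_f(P_{XY}) := Σ_{x,y} P_X(x)P_Y(y)·f(P_{XY}(x,y)/(P_X(x)P_Y(y))) ≤ Σ_y P_Y(y)·max{ f(exp(ℓ(X→y))), f(0) }. -/
import Mathlib


/-- f-information bound: for convex f with f(1)=0,
I_f(P_{XY}) ≤ E_Y[max{f(exp ℓ(X→Y)), f(0)}]. -/
theorem stmt_17 {α β : Type*} [Fintype α] [Fintype β]
    (p : α → β → ℝ)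
    (hp : ∀ x y, 0 ≤ p x y)
    (hsum : ∑ x, ∑ y, p x y = 1)
    (pX : α → ℝ) (hpX : ∀ x, pX x = ∑ y, p x y) (hXpos : ∀ x, 0 < pX x)
    (pY : β → ℝ) (hpY : ∀ y, pY y = ∑ x, p x y) (hYpos : ∀ y, 0 < pY y)
    (sX : Finset α) (hsX : ∀ x, x ∈ sX ↔ 0 < pX x) (hneX : sX.Nonempty)
    (f : ℝ → ℝ) (hf : ConvexOn ℝ (Set.Ici (0 : ℝ)) f) (hf1 : f 1 = 0) :
    ∑ x, ∑ y, pX x * pY y * f (p x y / (pX x * pY y)) ≤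
      ∑ y, pY y *
        max (f (sX.sup' hneX fun x => p x y / (pX x * pY y))) (f 0) := by
  have ht0 : ∀ x y, 0 ≤ p x y / (pX x * pY y) := fun x y =>
    div_nonneg (hp x y) (mul_nonneg (hXpos x).le (hYpos y).le)
  have htM : ∀ x y, p x y / (pX x * pY y) ≤
      sX.sup' hneX fun x => p x y / (pX x * pY y) := fun x y =>
    Finset.le_sup' (fun x => p x y / (pX x * pY y)) ((hsX x).2 (hXpos x))
  have hM0 : ∀ y, (0:ℝ) ≤ sX.sup' hneX fun x => p x y / (pX x * pY y) := by
    intro y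
    obtain ⟨x, hx⟩ := hneX
    exact le_trans (ht0 x y) (htM x y)
  have key : ∀ x y, f (p x y / (pX x * pY y)) ≤
      max (f (sX.sup' hneX fun x => p x y / (pX x * pY y))) (f 0) := by
    intro x y
    rw [max_comm]
    refine hf.le_on_segment (le_refl (0:ℝ)) (hM0 y) ?_
    rw [segment_eq_Icc (hM0 y)]
    exact ⟨ht0 x y, htM x y⟩
  have hpX1 : ∑ x, pX x = 1 := by
    calc ∑ x, pX x = ∑ x, ∑ y, p x y := by simp [hpX]
    _ = 1 := hsum
  calc ∑ x, ∑ y, pX x * pY y * f (p x y / (pX x * pY y))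
      ≤ ∑ x, ∑ y, pX x * pY y *
        max (f (sX.sup' hneX fun x => p x y / (pX x * pY y))) (f 0) := by
        refine Finset.sum_le_sum fun x _ => Finset.sum_le_sum fun y _ => ?_
        exact mul_le_mul_of_nonneg_left (key x y)
          (mul_nonneg (hXpos x).le (hYpos y).le)
    _ = ∑ y, pY y *
        max (f (sX.sup' hneX fun x => p x y / (pX x * pY y))) (f 0) := by
        rw [Finset.sum_comm]
        refine Finset.sum_congr rfl fun y _ => ?_
        simp_rw [mul_assoc]
        rw [← Finset.sum_mul, hpX1, one_mul]
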